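/- For every fixed α > 1, the function ψ(α, λ) = e^{-αλ} · ∑_{k=0}^∞ (λ^k/k!)^α is strictly decreasing as a function of λ on (0, +∞). -/

import Mathlib

open Real

namespace PsiAux

noncomputable def q (x : ℝ) (k : ℕ) : ℝ := x ^ k / (Nat.factorial k : ℝ)

noncomputable def dterm (α x : ℝ) (k : ℕ) : ℝ :=
  (k : ℝ) * x ^ (k - 1) / (Nat.factorial k : ℝ) * α * (x ^ k / (Nat.factorial k : ℝ)) ^ (α - 1)

lemma q_nonneg {x : ℝ} (hx : 0 ≤ x) (k : ℕ) : 0 ≤ q x k :=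
  div_nonneg (pow_nonneg hx k) (Nat.cast_nonneg _)

lemma q_pos {x : ℝ} (hx : 0 < x) (k : ℕ) : 0 < q x k :=
  div_pos (pow_pos hx k) (by exact_mod_cast (Nat.factorial_pos k))

lemma q_le_exp {x : ℝ} (hx : 0 ≤ x) (k : ℕ) : q x k ≤ Real.exp x :=
  Real.pow_div_factorial_le_exp x hx k

lemma hasDerivAt_term (α : ℝ) (hα : 1 < α) (k : ℕ) (x : ℝ) :
    HasDerivAt (fun l : ℝ => (l ^ k / (Nat.factorial k : ℝ)) ^ α) (dterm α x k) x :=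
  ((hasDerivAt_pow k x).div_const _).rpow_const (Or.inr hα.le)

lemma summable_mul_pow_div_factorial (R : ℝ) :
    Summable (fun k : ℕ => (k : ℝ) * R ^ (k - 1) / (Nat.factorial k : ℝ)) := by
  rw [← summable_nat_add_iff 1]
  have : (fun k : ℕ => ((k + 1 : ℕ) : ℝ) * R ^ ((k + 1) - 1) / (Nat.factorial (k + 1) : ℝ))
      = fun k : ℕ => R ^ k / (Nat.factorial k : ℝ) := by
    funext k
    rw [Nat.factorial_succ, Nat.add_sub_cancel]
    push_cast
    have h : ((k:ℝ) + 1) ≠ 0 := by positivity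
    have h2 : (Nat.factorial k : ℝ) ≠ 0 := by exact_mod_cast (Nat.factorial_pos k).ne'
    field_simp
  rw [this]
  exact Real.summable_pow_div_factorial R

lemma dterm_nonneg {α x : ℝ} (hα : 1 < α) (hx : 0 ≤ x) (k : ℕ) : 0 ≤ dterm α x k := by
  unfold dterm
  have hαpos : (0:ℝ) < α := lt_trans one_pos hα
  have h1 : (0:ℝ) ≤ (k : ℝ) * x ^ (k - 1) / (Nat.factorial k : ℝ) :=
    div_nonneg (mul_nonneg (Nat.cast_nonneg _) (pow_nonneg hx _)) (Nat.cast_nonneg _)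
  have h2 : (0:ℝ) ≤ (x ^ k / (Nat.factorial k : ℝ)) ^ (α - 1) :=
    Real.rpow_nonneg (div_nonneg (pow_nonneg hx _) (Nat.cast_nonneg _)) _
  positivity

lemma dterm_le {α x R : ℝ} (hα : 1 < α) (hx : 0 ≤ x) (hxR : x ≤ R) (k : ℕ) :
    dterm α x k ≤ (k : ℝ) * R ^ (k - 1) / (Nat.factorial k : ℝ) * α * Real.exp R ^ (α - 1) := by
  unfold dterm
  have hαpos : (0:ℝ) < α := lt_trans one_pos hα
  have ha : (k : ℝ) * x ^ (k - 1) / (Nat.factorial k : ℝ)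
      ≤ (k : ℝ) * R ^ (k - 1) / (Nat.factorial k : ℝ) := by
    gcongr
  have hb : (x ^ k / (Nat.factorial k : ℝ)) ^ (α - 1) ≤ Real.exp R ^ (α - 1) := by
    apply Real.rpow_le_rpow (q_nonneg hx k) _ (by linarith)
    exact (q_le_exp hx k).trans (Real.exp_le_exp.2 hxR)
  apply mul_le_mul (mul_le_mul_of_nonneg_right ha hαpos.le) hb
  · exact Real.rpow_nonneg (q_nonneg hx k) _
  · have h0R : (0:ℝ) ≤ R := hx.trans hxR
    exact mul_nonneg (div_nonneg (mul_nonneg (Nat.cast_nonneg _) (pow_nonneg h0R _))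
      (Nat.cast_nonneg _)) hαpos.le

lemma summable_dterm_bound (α R : ℝ) :
    Summable (fun k : ℕ =>
      (k : ℝ) * R ^ (k - 1) / (Nat.factorial k : ℝ) * α * Real.exp R ^ (α - 1)) := by
  simpa [mul_assoc] using
    ((summable_mul_pow_div_factorial R).mul_right (α * Real.exp R ^ (α - 1)))

lemma summable_dterm {α x : ℝ} (hα : 1 < α) (hx : 0 < x) : Summable (dterm α x) :=
  Summable.of_nonneg_of_le (dterm_nonneg hα hx.le)
    (fun k => dterm_le hα hx.le le_rfl k) (summable_dterm_bound α x)

lemma summable_q_rpow {α x : ℝ} (hα : 1 < α) (hx : 0 < x) :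
    Summable (fun k : ℕ => q x k ^ α) := by
  apply Summable.of_nonneg_of_le (fun k => Real.rpow_nonneg (q_nonneg hx.le k) _)
    (fun k => ?_) ((Real.summable_pow_div_factorial x).mul_left (Real.exp x ^ (α - 1)))
  have h : q x k ^ α = q x k ^ (α - 1) * q x k := by
    have h0 := Real.rpow_add (q_pos hx k) (α - 1) 1
    rw [sub_add_cancel, Real.rpow_one] at h0
    exact h0
  rw [h]
  have : q x k ^ (α - 1) ≤ Real.exp x ^ (α - 1) :=
    Real.rpow_le_rpow (q_nonneg hx.le k) (q_le_exp hx.le k) (by linarith)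
  calc q x k ^ (α - 1) * q x k ≤ Real.exp x ^ (α - 1) * q x k :=
        mul_le_mul_of_nonneg_right this (q_nonneg hx.le k)
    _ = Real.exp x ^ (α - 1) * (x ^ k / (Nat.factorial k : ℝ)) := rfl

lemma hasDerivAt_tsum_q {α x : ℝ} (hα : 1 < α) (hx : 0 < x) :
    HasDerivAt (fun l : ℝ => ∑' k : ℕ, (l ^ k / (Nat.factorial k : ℝ)) ^ α)
      (∑' k : ℕ, dterm α x k) x := by
  apply hasDerivAt_tsum_of_isPreconnected (summable_dterm_bound α (x + 1))
    (isOpen_Ioo (a := (0:ℝ)) (b := x + 1)) (isPreconnected_Ioo)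
    (fun k y _ => hasDerivAt_term α hα k y)
    (fun k y hy => ?_) (Set.mem_Ioo.2 ⟨hx, by linarith⟩)
    (summable_q_rpow hα hx) (Set.mem_Ioo.2 ⟨hx, by linarith⟩)
  rw [Real.norm_eq_abs, abs_of_nonneg (dterm_nonneg hα hy.1.le k)]
  exact dterm_le hα hy.1.le hy.2.le k

lemma dterm_zero (α x : ℝ) : dterm α x 0 = 0 := by
  unfold dterm; simp

lemma dterm_succ {α x : ℝ} (hx : 0 < x) (k : ℕ) :
    dterm α x (k + 1) = α * (q x (k + 1) ^ (α - 1) * q x k) := by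
  unfold dterm q
  rw [Nat.factorial_succ, Nat.add_sub_cancel]
  have h1 : ((k:ℝ) + 1) ≠ 0 := by positivity
  have h2 : (Nat.factorial k : ℝ) ≠ 0 := by exact_mod_cast (Nat.factorial_pos k).ne'
  push_cast
  field_simp

lemma young {α x : ℝ} (hα : 1 < α) (hx : 0 < x) (k : ℕ) :
    α * (q x (k + 1) ^ (α - 1) * q x k) ≤ (α - 1) * q x (k + 1) ^ α + q x k ^ α := by
  have hαpos : (0:ℝ) < α := lt_trans one_pos hα
  have hα0 : α ≠ 0 := hαpos.ne'
  have key := Real.geom_mean_le_arith_mean2_weighted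
    (w₁ := (α - 1) / α) (w₂ := 1 / α) (p₁ := q x (k + 1) ^ α) (p₂ := q x k ^ α)
    (div_nonneg (by linarith) hαpos.le) (by positivity)
    (Real.rpow_nonneg (q_nonneg hx.le _) _) (Real.rpow_nonneg (q_nonneg hx.le _) _)
    (by field_simp; ring)
  have e1 : (q x (k + 1) ^ α) ^ ((α - 1) / α) = q x (k + 1) ^ (α - 1) := by
    rw [← Real.rpow_mul (q_nonneg hx.le _)]
    congr 1
    field_simp
  have e2 : (q x k ^ α) ^ (1 / α) = q x k := by
    rw [← Real.rpow_mul (q_nonneg hx.le _)]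
    rw [mul_one_div, div_self hα0, Real.rpow_one]
  rw [e1, e2] at key
  have := mul_le_mul_of_nonneg_left key hαpos.le
  calc α * (q x (k + 1) ^ (α - 1) * q x k)
      ≤ α * ((α - 1) / α * q x (k + 1) ^ α + 1 / α * q x k ^ α) := this
    _ = (α - 1) * q x (k + 1) ^ α + q x k ^ α := by
        field_simp

lemma tsum_dterm_le {α x : ℝ} (hα : 1 < α) (hx : 0 < x) :
    ∑' k : ℕ, dterm α x k
      ≤ α * (∑' k : ℕ, (x ^ k / (Nat.factorial k : ℝ)) ^ α) - (α - 1) := by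
  have hαpos : (0:ℝ) < α := lt_trans one_pos hα
  have hS := summable_dterm hα hx
  have hQ := summable_q_rpow hα hx
  have hQ1 : Summable (fun k : ℕ => q x (k + 1) ^ α) :=
    (summable_nat_add_iff 1).2 hQ
  have hRHS : Summable (fun k : ℕ => (α - 1) * q x (k + 1) ^ α + q x k ^ α) :=
    (hQ1.mul_left _).add hQ
  have hq0 : q x 0 ^ α = 1 := by
    unfold q; simp
  have hQsplit : ∑' k : ℕ, q x k ^ α = 1 + ∑' k : ℕ, q x (k + 1) ^ α := by
    rw [hQ.tsum_eq_zero_add, hq0]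
  have hSsplit : ∑' k : ℕ, dterm α x k = ∑' k : ℕ, dterm α x (k + 1) := by
    rw [hS.tsum_eq_zero_add, dterm_zero, zero_add]
  have hS1 : Summable (fun k : ℕ => dterm α x (k + 1)) :=
    (summable_nat_add_iff 1).2 hS
  have hmain : ∑' k : ℕ, dterm α x (k + 1)
      ≤ ∑' k : ℕ, ((α - 1) * q x (k + 1) ^ α + q x k ^ α) := by
    refine Summable.tsum_le_tsum (fun k => ?_) hS1 hRHS
    rw [dterm_succ hx k]
    exact young hα hx k
  have htsum : ∑' k : ℕ, ((α - 1) * q x (k + 1) ^ α + q x k ^ α)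
      = (α - 1) * (∑' k : ℕ, q x (k + 1) ^ α) + ∑' k : ℕ, q x k ^ α := by
    rw [Summable.tsum_add (hQ1.mul_left _) hQ, tsum_mul_left]
  have hFeq : ∑' k : ℕ, (x ^ k / (Nat.factorial k : ℝ)) ^ α = ∑' k : ℕ, q x k ^ α := by
    simp only [q]
  rw [hFeq, hSsplit]
  rw [htsum] at hmain
  nlinarith [hmain, hQsplit]

end PsiAux

theorem psi_strictAntiOn_of_one_lt_alpha (α : ℝ) (hα : 1 < α) :
    StrictAntiOn (fun l : ℝ =>
      Real.exp (-α * l) * ∑' k : ℕ, (l ^ k / (Nat.factorial k : ℝ)) ^ α)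
      (Set.Ioi (0 : ℝ)) := by
  have hderiv : ∀ x ∈ Set.Ioi (0:ℝ),
      HasDerivAt (fun l : ℝ =>
        Real.exp (-α * l) * ∑' k : ℕ, (l ^ k / (Nat.factorial k : ℝ)) ^ α)
        (Real.exp (-α * x) * (-α * 1) * (∑' k : ℕ, (x ^ k / (Nat.factorial k : ℝ)) ^ α)
          + Real.exp (-α * x) * (∑' k : ℕ, PsiAux.dterm α x k)) x := by
    intro x hx
    have hexp : HasDerivAt (fun l : ℝ => Real.exp (-α * l)) (Real.exp (-α * x) * (-α * 1)) x :=
      ((hasDerivAt_id x).const_mul (-α)).exp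
    exact hexp.mul (PsiAux.hasDerivAt_tsum_q hα hx)
  have hneg : ∀ x ∈ Set.Ioi (0:ℝ),
      Real.exp (-α * x) * (-α * 1) * (∑' k : ℕ, (x ^ k / (Nat.factorial k : ℝ)) ^ α)
        + Real.exp (-α * x) * (∑' k : ℕ, PsiAux.dterm α x k) < 0 := by
    intro x hx
    have hkey := PsiAux.tsum_dterm_le hα hx
    have hexppos := Real.exp_pos (-α * x)
    nlinarith [mul_le_mul_of_nonneg_left hkey hexppos.le,
      mul_pos hexppos (by linarith : (0:ℝ) < α - 1)]
  apply strictAntiOn_of_deriv_neg (convex_Ioi 0)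
  · intro x hx
    exact (hderiv x hx).continuousAt.continuousWithinAt
  · intro x hx
    rw [interior_Ioi] at hx
    rw [(hderiv x hx).deriv]
    exact hneg x hx
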